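/- arXiv:0711.0694 — 2 statements merged into one kernel-verified Lean document; each statement's English description precedes it below -/
import Mathlib

section
/- Asymptotic performance of Approximate Value Iteration with concentration coefficient: run Approximate Value Iteration v_{k+1} = T v_k + ε_{k+1} with π_k greedy with respect to v_{k−1}. Let ν be a distribution with ν(j) > 0 for all j, C(ν) = max_{i,j,a} p(i,a,j)/ν(j), and p ≥ 1. If the approximation errors are uniformly bounded, ‖ε_k‖_{p,ν} ≤ ε for all k, then limsup_k ‖v_* − v^{π_k}‖_∞ ≤ (2γ·C(ν)^{1/p}/(1−γ)²)·ε. -/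
open Matrix Filter Finset

section MDPDefs

variable {X : Type*} {A : Type*} [Fintype X] [Nonempty X] [DecidableEq X]
  [Fintype A] [Nonempty A]

/-- Transition matrix of a policy: `P^π i j = p i (π i) j`. -/
noncomputable def Pmat (p : X → A → X → ℝ) (π : X → A) : Matrix X X ℝ :=
  Matrix.of fun i j => p i (π i) j

/-- Expected reward vector of a policy. -/
noncomputable def rvec (p : X → A → X → ℝ) (r : X → A → X → ℝ) (π : X → A) : X → ℝ :=
  fun i => ∑ j, p i (π i) j * r i (π i) j

/-- The Bellman operator of a policy: `T^π v = r^π + γ P^π v`. -/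
noncomputable def Tpol (p : X → A → X → ℝ) (r : X → A → X → ℝ) (γ : ℝ)
    (π : X → A) (v : X → ℝ) : X → ℝ :=
  rvec p r π + γ • (Pmat p π).mulVec v

/-- The optimal Bellman operator: `(T v) i = max_a Σ_j p i a j (r i a j + γ v j)`. -/
noncomputable def Topt (p : X → A → X → ℝ) (r : X → A → X → ℝ) (γ : ℝ)
    (v : X → ℝ) : X → ℝ :=
  fun i => Finset.univ.sup' Finset.univ_nonempty
    (fun a => ∑ j, p i a j * (r i a j + γ * v j))

/-- A policy is greedy with respect to `v` when `T^π v = T v`. -/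
def Greedy (p : X → A → X → ℝ) (r : X → A → X → ℝ) (γ : ℝ)
    (π : X → A) (v : X → ℝ) : Prop :=
  Tpol p r γ π v = Topt p r γ v

/-- The value of a policy: `v^π = (I - γ P^π)⁻¹ r^π`. -/
noncomputable def vpi (p : X → A → X → ℝ) (r : X → A → X → ℝ) (γ : ℝ)
    (π : X → A) : X → ℝ :=
  ((1 : Matrix X X ℝ) - γ • Pmat p π)⁻¹.mulVec (rvec p r π)

/-- The λ policy iteration update operator
`T_λ^π v = (I - λγ P^π)⁻¹ (r^π + (1-λ)γ P^π v)`. -/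
noncomputable def Tlam (p : X → A → X → ℝ) (r : X → A → X → ℝ) (γ lam : ℝ)
    (π : X → A) (v : X → ℝ) : X → ℝ :=
  ((1 : Matrix X X ℝ) - (lam * γ) • Pmat p π)⁻¹.mulVec
    (rvec p r π + ((1 - lam) * γ) • (Pmat p π).mulVec v)

/-- A stochastic matrix: nonnegative entries, all row sums equal to one. -/
def IsStochastic (M : Matrix X X ℝ) : Prop :=
  (∀ i j, 0 ≤ M i j) ∧ ∀ i, ∑ j, M i j = 1

/-- A probability distribution on `X`. -/
def IsDistribution (μ : X → ℝ) : Prop :=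
  (∀ x, 0 ≤ μ x) ∧ ∑ x, μ x = 1

/-- Weighted L_p norm `‖u‖_{p,μ} = (Σ_x μ x |u x|^p)^(1/p)`. -/
noncomputable def wLpNorm (pp : ℝ) (μ : X → ℝ) (u : X → ℝ) : ℝ :=
  (∑ x, μ x * |u x| ^ pp) ^ (1 / pp)

/-- Max norm `‖u‖_∞ = max_x |u x|`. -/
noncomputable def linfNorm (u : X → ℝ) : ℝ :=
  Finset.univ.sup' Finset.univ_nonempty fun x => |u x|

/-- Span seminorm `spn_∞ u = max_x u x - min_x u x`. -/
noncomputable def spanInf (u : X → ℝ) : ℝ :=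
  (Finset.univ.sup' Finset.univ_nonempty u) - (Finset.univ.inf' Finset.univ_nonempty u)

/-- Span seminorm `spn_{p,μ} u = 2 min_a ‖u - a e‖_{p,μ}`. -/
noncomputable def spanLp (pp : ℝ) (μ : X → ℝ) (u : X → ℝ) : ℝ :=
  2 * ⨅ a : ℝ, wLpNorm pp μ (fun x => u x - a)

/-- Componentwise limsup of a sequence of vectors. -/
noncomputable def limsupVec (f : ℕ → X → ℝ) : X → ℝ :=
  fun x => Filter.atTop.limsup fun k => f k x

/-- The product `M k * M (k-1) * ⋯ * M (j+1)` (identity when `k ≤ j`). -/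
noncomputable def descProd (M : ℕ → Matrix X X ℝ) (j k : ℕ) : Matrix X X ℝ :=
  ((List.range (k - j)).map fun t => M (k - t)).prod

/-- The mixture distribution `½ μ (M + M')` (as a row vector pushed through matrices). -/
noncomputable def mixDist (μ : X → ℝ) (M M' : Matrix X X ℝ) : X → ℝ :=
  Matrix.vecMul μ (((1 : ℝ) / 2) • (M + M'))

/-- Concentration coefficient `C(ν) = max_{i,a,j} p i a j / ν j`. -/
noncomputable def concCoef (p : X → A → X → ℝ) (ν : X → ℝ) : ℝ :=
  Finset.univ.sup' Finset.univ_nonempty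
    (fun x : X × A × X => p x.1 x.2.1 x.2.2 / ν x.2.2)

/-- `β = (1-λ)γ/(1-λγ)`. -/
noncomputable def betaF (γ lam : ℝ) : ℝ := (1 - lam) * γ / (1 - lam * γ)

/-- `A_k = (1-λγ)(I - λγ P_k)⁻¹ P_k`. -/
noncomputable def Amat (p : X → A → X → ℝ) (γ lam : ℝ) (π : X → A) : Matrix X X ℝ :=
  (1 - lam * γ) • (((1 : Matrix X X ℝ) - (lam * γ) • Pmat p π)⁻¹ * Pmat p π)

/-- `B_{jk}` (also `E'_{k k₀}` with `k₀ = j`). -/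
noncomputable def Bmat (p : X → A → X → ℝ) (γ lam : ℝ) (π : ℕ → X → A) (πs : X → A)
    (j k : ℕ) : Matrix X X ℝ :=
  ((1 - γ) / γ ^ (k - j)) • (
    (lam * γ / (1 - lam * γ)) •
      (∑ i ∈ Finset.Ico j k, (γ ^ (k - 1 - i) * betaF γ lam ^ (i - j)) •
        ((Pmat p πs) ^ (k - 1 - i) * descProd (fun l => Amat p γ lam (π l)) j (i + 1)))
    + (betaF γ lam ^ (k - j)) •
      (((1 : Matrix X X ℝ) - γ • Pmat p (π k))⁻¹ *
        descProd (fun l => Amat p γ lam (π l)) j k))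

/-- `B'_{jk} = γ B_{jk} P_j + (1-γ)(P_*)^{k-j}`. -/
noncomputable def Bmat' (p : X → A → X → ℝ) (γ lam : ℝ) (π : ℕ → X → A) (πs : X → A)
    (j k : ℕ) : Matrix X X ℝ :=
  γ • (Bmat p γ lam π πs j k * Pmat p (π j)) + (1 - γ) • (Pmat p πs) ^ (k - j)

/-- `E_{k k₀} = (1-γ)(P_*)^{k-k₀}(I-γP_*)⁻¹`. -/
noncomputable def Emat (p : X → A → X → ℝ) (γ : ℝ) (πs : X → A) (k0 k : ℕ) :
    Matrix X X ℝ :=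
  (1 - γ) • ((Pmat p πs) ^ (k - k0) * ((1 : Matrix X X ℝ) - γ • Pmat p πs)⁻¹)

/-- `F_{k k₀} = (1-γ)(P_*)^{k-k₀} + γ E'_{k k₀} P_*`. -/
noncomputable def Fmat (p : X → A → X → ℝ) (γ lam : ℝ) (π : ℕ → X → A) (πs : X → A)
    (k0 k : ℕ) : Matrix X X ℝ :=
  (1 - γ) • (Pmat p πs) ^ (k - k0) + γ • (Bmat p γ lam π πs k0 k * Pmat p πs)

/-- `(1-γ)²(I-γP_{πs})⁻¹ (P_{πa} (I-γP_{πb})⁻¹)`; this gives `C_k` and `C'_k`. -/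
noncomputable def Cmat (p : X → A → X → ℝ) (γ : ℝ) (πs πa πb : X → A) :
    Matrix X X ℝ :=
  (1 - γ) ^ 2 • (((1 : Matrix X X ℝ) - γ • Pmat p πs)⁻¹ *
    (Pmat p πa * ((1 : Matrix X X ℝ) - γ • Pmat p πb)⁻¹))

/-- `D = (1-γ) P (I-γP)⁻¹`. -/
noncomputable def Dmat (p : X → A → X → ℝ) (γ : ℝ) (π : X → A) : Matrix X X ℝ :=
  (1 - γ) • (Pmat p π * ((1 : Matrix X X ℝ) - γ • Pmat p π)⁻¹)

end MDPDefs


section AuxAVI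

variable {X A : Type*} [Fintype X] [Nonempty X] [DecidableEq X] [Fintype A] [Nonempty A]

lemma keyMax (P : Matrix X X ℝ) (hP0 : ∀ i j, 0 ≤ P i j) (hP1 : ∀ i, ∑ j, P i j = 1)
    {γ c : ℝ} (hγ0 : 0 ≤ γ) (hγ1 : γ < 1) (d : X → ℝ)
    (h : ∀ i, d i ≤ c + γ * ∑ j, P i j * d j) : ∀ i, d i ≤ c / (1 - γ) := by
  obtain ⟨i0, -, hi0⟩ := Finset.exists_mem_eq_sup' Finset.univ_nonempty d
  have hM : ∀ j, d j ≤ d i0 := fun j => hi0 ▸ Finset.le_sup' d (Finset.mem_univ j)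
  have h1 : ∑ j, P i0 j * d j ≤ d i0 := by
    calc ∑ j, P i0 j * d j ≤ ∑ j, P i0 j * d i0 :=
          Finset.sum_le_sum fun j _ => mul_le_mul_of_nonneg_left (hM j) (hP0 i0 j)
      _ = d i0 := by rw [← Finset.sum_mul, hP1, one_mul]
  have h2 : d i0 ≤ c / (1 - γ) := by
    rw [le_div_iff₀ (by linarith)]
    nlinarith [h i0, mul_le_mul_of_nonneg_left h1 hγ0]
  exact fun i => (hM i).trans h2

lemma isUnitOneSub (P : Matrix X X ℝ) (hP0 : ∀ i j, 0 ≤ P i j) (hP1 : ∀ i, ∑ j, P i j = 1)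
    {γ : ℝ} (hγ0 : 0 ≤ γ) (hγ1 : γ < 1) :
    IsUnit ((1 : Matrix X X ℝ) - γ • P) := by
  rw [← Matrix.mulVec_injective_iff_isUnit]
  intro x y hxy
  have hd : ∀ i, x i - y i = γ * ∑ j, P i j * (x j - y j) := by
    intro i
    have h1 := congrFun hxy i
    simp only [Matrix.sub_mulVec, Matrix.one_mulVec, Matrix.smul_mulVec, Pi.sub_apply,
      Pi.smul_apply, smul_eq_mul] at h1
    have h2 : (P.mulVec fun j => x j - y j) i = ∑ j, P i j * (x j - y j) := by
      simp [Matrix.mulVec, dotProduct]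
    have h3 : (P.mulVec fun j => x j - y j) i = P.mulVec x i - P.mulVec y i := by
      rw [show (fun j => x j - y j) = x - y from rfl, Matrix.mulVec_sub]; rfl
    have h4 := h3.symm.trans h2
    rw [← h4]
    linear_combination h1
  have habs : ∀ i, |x i - y i| ≤ 0 + γ * ∑ j, P i j * |x j - y j| := by
    intro i
    rw [hd i, zero_add, abs_mul, abs_of_nonneg hγ0]
    refine mul_le_mul_of_nonneg_left ?_ hγ0
    refine (Finset.abs_sum_le_sum_abs _ _).trans (Finset.sum_le_sum fun j _ => ?_)
    rw [abs_mul, abs_of_nonneg (hP0 i j)]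
  have hle := keyMax P hP0 hP1 hγ0 hγ1 (fun i => |x i - y i|) habs
  funext i
  have := hle i
  rw [zero_div] at this
  have h0 := abs_nonneg (x i - y i)
  have : x i - y i = 0 := by
    have := le_antisymm this h0
    exact abs_eq_zero.mp this
  linarith

lemma tpol_apply' (p : X → A → X → ℝ) (r : X → A → X → ℝ) (γ : ℝ) (π : X → A)
    (w : X → ℝ) (i : X) :
    Tpol p r γ π w i = rvec p r π i + γ * ∑ j, p i (π i) j * w j := by
  simp only [Tpol, Pi.add_apply, Pi.smul_apply, smul_eq_mul]
  simp [Pmat, Matrix.mulVec, dotProduct]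

lemma vpi_fixed (p : X → A → X → ℝ) (r : X → A → X → ℝ) {γ : ℝ}
    (hp0 : ∀ i a j, 0 ≤ p i a j) (hp1 : ∀ i a, ∑ j, p i a j = 1)
    (hγ0 : 0 ≤ γ) (hγ1 : γ < 1) (π : X → A) :
    ∀ i, vpi p r γ π i = rvec p r π i + γ * ∑ j, p i (π i) j * vpi p r γ π j := by
  have hu := isUnitOneSub (Pmat p π) (fun i j => hp0 i (π i) j) (fun i => hp1 i (π i)) hγ0 hγ1
  have hmv : ((1 : Matrix X X ℝ) - γ • Pmat p π).mulVec (vpi p r γ π) = rvec p r π := by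
    rw [vpi, Matrix.mulVec_mulVec,
      Matrix.mul_nonsing_inv _ ((Matrix.isUnit_iff_isUnit_det _).mp hu), Matrix.one_mulVec]
  intro i
  have h1 := congrFun hmv i
  simp only [Matrix.sub_mulVec, Matrix.one_mulVec, Matrix.smul_mulVec, Pi.sub_apply,
    Pi.smul_apply, smul_eq_mul] at h1
  have h2 : (Pmat p π).mulVec (vpi p r γ π) i = ∑ j, p i (π i) j * vpi p r γ π j := by
    simp [Pmat, Matrix.mulVec, dotProduct]
  rw [h2] at h1
  linarith

lemma vpi_le (p : X → A → X → ℝ) (r : X → A → X → ℝ) {γ : ℝ}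
    (hp0 : ∀ i a j, 0 ≤ p i a j) (hp1 : ∀ i a, ∑ j, p i a j = 1)
    (hγ0 : 0 ≤ γ) (hγ1 : γ < 1) (vstar : X → ℝ) (hfix : Topt p r γ vstar = vstar)
    (π : X → A) : ∀ i, vpi p r γ π i ≤ vstar i := by
  have hfp := vpi_fixed p r hp0 hp1 hγ0 hγ1 π
  have hkey : ∀ i, vpi p r γ π i - vstar i ≤
      0 + γ * ∑ j, Pmat p π i j * (vpi p r γ π j - vstar j) := by
    intro i
    have h1 := hfp i
    have h2 : rvec p r π i + γ * ∑ j, p i (π i) j * vstar j ≤ vstar i := by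
      have hT : Tpol p r γ π vstar i ≤ Topt p r γ vstar i := by
        rw [tpol_apply']
        have h3 : ∑ j, p i (π i) j * (r i (π i) j + γ * vstar j) ≤ Topt p r γ vstar i :=
          Finset.le_sup' (fun a => ∑ j, p i a j * (r i a j + γ * vstar j)) (Finset.mem_univ (π i))
        calc rvec p r π i + γ * ∑ j, p i (π i) j * vstar j
            = ∑ j, p i (π i) j * (r i (π i) j + γ * vstar j) := by
              rw [rvec, Finset.mul_sum, ← Finset.sum_add_distrib]
              exact Finset.sum_congr rfl fun j _ => by ring
          _ ≤ Topt p r γ vstar i := h3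
      calc rvec p r π i + γ * ∑ j, p i (π i) j * vstar j = Tpol p r γ π vstar i :=
            (tpol_apply' p r γ π vstar i).symm
        _ ≤ Topt p r γ vstar i := hT
        _ = vstar i := congrFun hfix i
    have h3 : ∑ j, Pmat p π i j * (vpi p r γ π j - vstar j)
        = ∑ j, p i (π i) j * vpi p r γ π j - ∑ j, p i (π i) j * vstar j := by
      rw [← Finset.sum_sub_distrib]
      exact Finset.sum_congr rfl fun j _ => by simp [Pmat]; ring
    rw [h3]
    linarith
  have := keyMax (Pmat p π) (fun i j => hp0 i (π i) j) (fun i => hp1 i (π i)) hγ0 hγ1 _ hkey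
  intro i
  have h := this i
  rw [zero_div] at h
  linarith

lemma row_jensen (p : X → A → X → ℝ)
    (hp0 : ∀ i a j, 0 ≤ p i a j) (hp1 : ∀ i a, ∑ j, p i a j = 1)
    (ν : X → ℝ) (hνpos : ∀ j, 0 < ν j) (pp : ℝ) (hpp : 1 ≤ pp)
    (u : X → ℝ) (i : X) (a : A) :
    ∑ j, p i a j * |u j| ≤ concCoef p ν ^ (1 / pp) * wLpNorm pp ν u := by
  have hC : ∀ j, p i a j ≤ concCoef p ν * ν j := by
    intro j
    have h := Finset.le_sup' (fun x : X × A × X => p x.1 x.2.1 x.2.2 / ν x.2.2)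
      (Finset.mem_univ (i, a, j))
    exact (div_le_iff₀ (hνpos j)).mp h
  have hC0 : 0 ≤ concCoef p ν :=
    le_trans (div_nonneg (hp0 i a i) (hνpos i).le)
      (Finset.le_sup' (fun x : X × A × X => p x.1 x.2.1 x.2.2 / ν x.2.2)
        (Finset.mem_univ (i, a, i)))
  have hsum0 : 0 ≤ ∑ j, ν j * |u j| ^ pp :=
    Finset.sum_nonneg fun j _ => mul_nonneg (hνpos j).le (Real.rpow_nonneg (abs_nonneg _) _)
  calc ∑ j, p i a j * |u j|
      ≤ (∑ j, p i a j * |u j| ^ pp) ^ (1 / pp) :=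
        Real.arith_mean_le_rpow_mean Finset.univ _ _ (fun j _ => hp0 i a j) (hp1 i a)
          (fun j _ => abs_nonneg _) hpp
    _ ≤ (concCoef p ν * ∑ j, ν j * |u j| ^ pp) ^ (1 / pp) := by
        refine Real.rpow_le_rpow
          (Finset.sum_nonneg fun j _ => mul_nonneg (hp0 i a j)
            (Real.rpow_nonneg (abs_nonneg _) _)) ?_ (by positivity)
        rw [Finset.mul_sum]
        refine Finset.sum_le_sum fun j _ => ?_
        calc p i a j * |u j| ^ pp ≤ concCoef p ν * ν j * |u j| ^ pp :=
              mul_le_mul_of_nonneg_right (hC j) (Real.rpow_nonneg (abs_nonneg _) _)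
          _ = concCoef p ν * (ν j * |u j| ^ pp) := by ring
    _ = concCoef p ν ^ (1 / pp) * wLpNorm pp ν u := by
        rw [Real.mul_rpow hC0 hsum0]; rfl

lemma topt_contract (p : X → A → X → ℝ) (r : X → A → X → ℝ)
    (hp0 : ∀ i a j, 0 ≤ p i a j) (γ : ℝ) (hγ0 : 0 ≤ γ) (w w' : X → ℝ) (b : ℝ)
    (hb : ∀ j a, ∑ l, p j a l * |w l - w' l| ≤ b) (j : X) :
    |Topt p r γ w j - Topt p r γ w' j| ≤ γ * b := by
  have key : ∀ (x y : X → ℝ), (∀ j a, ∑ l, p j a l * |x l - y l| ≤ b) →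
      Topt p r γ x j - Topt p r γ y j ≤ γ * b := by
    intro x y hxy
    rw [sub_le_iff_le_add]
    show Finset.univ.sup' Finset.univ_nonempty
      (fun a => ∑ l, p j a l * (r j a l + γ * x l)) ≤ _
    apply Finset.sup'_le
    intro a _
    have h1 : ∑ l, p j a l * (r j a l + γ * x l) - ∑ l, p j a l * (r j a l + γ * y l)
        = γ * ∑ l, p j a l * (x l - y l) := by
      rw [← Finset.sum_sub_distrib, Finset.mul_sum]
      exact Finset.sum_congr rfl fun l _ => by ring
    have h2 : ∑ l, p j a l * (x l - y l) ≤ ∑ l, p j a l * |x l - y l| :=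
      Finset.sum_le_sum fun l _ => mul_le_mul_of_nonneg_left (le_abs_self _) (hp0 j a l)
    have h3 : ∑ l, p j a l * (r j a l + γ * y l) ≤ Topt p r γ y j :=
      Finset.le_sup' (fun a => ∑ l, p j a l * (r j a l + γ * y l)) (Finset.mem_univ a)
    have h4 := mul_le_mul_of_nonneg_left (h2.trans (hxy j a)) hγ0
    linarith
  have hb' : ∀ j a, ∑ l, p j a l * |w' l - w l| ≤ b := by
    intro j a; simpa [abs_sub_comm] using hb j a
  rw [abs_sub_le_iff]
  exact ⟨key w w' hb, key w' w hb'⟩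

end AuxAVI

/-- Asymptotic performance of Approximate Value Iteration with concentration coefficient. -/
theorem approx_VI_concentration
    {X A : Type*} [Fintype X] [Nonempty X] [DecidableEq X] [Fintype A] [Nonempty A]
    (p : X → A → X → ℝ) (r : X → A → X → ℝ) (γ : ℝ)
    (hp0 : ∀ i a j, 0 ≤ p i a j) (hp1 : ∀ i a, ∑ j, p i a j = 1)
    (hγ0 : 0 < γ) (hγ1 : γ < 1)
    (vstar : X → ℝ) (hfix : Topt p r γ vstar = vstar)
    -- approximate value iteration with errors ε, `π (k+1)` greedy w.r.t. `v k`
    (v : ℕ → X → ℝ) (π : ℕ → X → A) (ε : ℕ → X → ℝ)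
    (hgreedy : ∀ k, Greedy p r γ (π (k + 1)) (v k))
    (hupd : ∀ k, v (k + 1) = Topt p r γ (v k) + ε (k + 1))
    (ν : X → ℝ) (hν : IsDistribution ν) (hνpos : ∀ j, 0 < ν j)
    (pp : ℝ) (hpp : 1 ≤ pp)
    -- uniformly bounded approximation errors
    (εb : ℝ) (hεb : ∀ k, wLpNorm pp ν (ε k) ≤ εb) :
    Filter.atTop.limsup (fun k => linfNorm (vstar - vpi p r γ (π k))) ≤
      2 * γ * concCoef p ν ^ (1 / pp) / (1 - γ) ^ 2 * εb := by
  classical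
  obtain ⟨x0⟩ := (inferInstance : Nonempty X)
  obtain ⟨a0⟩ := (inferInstance : Nonempty A)
  have hγ0' : (0:ℝ) ≤ γ := hγ0.le
  have h1γ : (0:ℝ) < 1 - γ := by linarith
  have hC0 : 0 ≤ concCoef p ν :=
    le_trans (div_nonneg (hp0 x0 a0 x0) (hνpos x0).le)
      (Finset.le_sup' (fun x : X × A × X => p x.1 x.2.1 x.2.2 / ν x.2.2)
        (Finset.mem_univ (x0, a0, x0)))
  have hCp0 : 0 ≤ concCoef p ν ^ (1 / pp) := Real.rpow_nonneg hC0 _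
  have hεb0 : 0 ≤ εb :=
    le_trans (Real.rpow_nonneg (Finset.sum_nonneg fun j _ =>
      mul_nonneg (hνpos j).le (Real.rpow_nonneg (abs_nonneg _) _)) _) (hεb 0)
  set D : ℕ → X → ℝ := fun k j => |vstar j - v k j| with hD
  set t : ℕ → ℝ := fun k => Finset.univ.sup' Finset.univ_nonempty
    (fun x : X × A => ∑ j, p x.1 x.2 j * D k j) with ht
  have htle : ∀ k i a, ∑ j, p i a j * D k j ≤ t k := fun k i a =>
    Finset.le_sup' (fun x : X × A => ∑ j, p x.1 x.2 j * D k j) (Finset.mem_univ (i, a))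
  have ht0 : ∀ k, 0 ≤ t k := fun k =>
    le_trans (Finset.sum_nonneg fun j _ => mul_nonneg (hp0 x0 a0 j) (abs_nonneg _))
      (htle k x0 a0)
  -- recursion for t
  have hrec : ∀ k, t (k + 1) ≤ γ * t k + concCoef p ν ^ (1 / pp) * εb := by
    intro k
    rw [ht]
    apply Finset.sup'_le
    rintro ⟨i, a⟩ -
    have hstep : ∀ j, D (k + 1) j ≤ γ * t k + |ε (k + 1) j| := by
      intro j
      have h1 : v (k + 1) j = Topt p r γ (v k) j + ε (k + 1) j := by rw [hupd k]; rfl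
      have h2 : |vstar j - Topt p r γ (v k) j| ≤ γ * t k := by
        have hc := topt_contract p r hp0 γ hγ0' vstar (v k) (t k) (fun j a => htle k j a) j
        calc |vstar j - Topt p r γ (v k) j|
            = |Topt p r γ vstar j - Topt p r γ (v k) j| := by
              rw [show Topt p r γ vstar j = vstar j from congrFun hfix j]
          _ ≤ γ * t k := hc
      have h3 : D (k + 1) j = |(vstar j - Topt p r γ (v k) j) - ε (k + 1) j| := by
        rw [hD]; simp only []; rw [h1]; ring_nf
      rw [h3]
      calc |(vstar j - Topt p r γ (v k) j) - ε (k + 1) j|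
          ≤ |vstar j - Topt p r γ (v k) j| + |ε (k + 1) j| := abs_sub _ _
        _ ≤ γ * t k + |ε (k + 1) j| := by linarith
    calc ∑ j, p i a j * D (k + 1) j
        ≤ ∑ j, p i a j * (γ * t k + |ε (k + 1) j|) :=
          Finset.sum_le_sum fun j _ => mul_le_mul_of_nonneg_left (hstep j) (hp0 i a j)
      _ = (∑ j, p i a j) * (γ * t k) + ∑ j, p i a j * |ε (k + 1) j| := by
          rw [Finset.sum_mul, ← Finset.sum_add_distrib]
          exact Finset.sum_congr rfl fun j _ => by ring
      _ ≤ γ * t k + concCoef p ν ^ (1 / pp) * εb := by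
          rw [hp1 i a, one_mul]
          have h4 := row_jensen p hp0 hp1 ν hνpos pp hpp (ε (k + 1)) i a
          have h5 := mul_le_mul_of_nonneg_left (hεb (k + 1)) hCp0
          linarith
  -- geometric bound
  have hgeo : ∀ k, t k ≤ γ ^ k * t 0 + concCoef p ν ^ (1 / pp) * εb / (1 - γ) := by
    intro k
    induction k with
    | zero =>
      have : 0 ≤ concCoef p ν ^ (1 / pp) * εb / (1 - γ) := by positivity
      simp only [pow_zero, one_mul]
      linarith
    | succ k ih =>
      have h2 := mul_le_mul_of_nonneg_left ih hγ0'
      have h3 : γ * (γ ^ k * t 0 + concCoef p ν ^ (1 / pp) * εb / (1 - γ))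
          + concCoef p ν ^ (1 / pp) * εb
          = γ ^ (k + 1) * t 0 + concCoef p ν ^ (1 / pp) * εb / (1 - γ) := by
        field_simp
        ring
      linarith [hrec k]
  -- per-step bound
  have hfin : ∀ k, linfNorm (vstar - vpi p r γ (π (k + 1))) ≤ 2 * γ * t k / (1 - γ) := by
    intro k
    set π' := π (k + 1) with hπ'
    have hfp := vpi_fixed p r hp0 hp1 hγ0' hγ1 π'
    have hle := vpi_le p r hp0 hp1 hγ0' hγ1 vstar hfix π'
    have hg : Tpol p r γ π' (v k) = Topt p r γ (v k) := hgreedy k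
    have hkey : ∀ i, vstar i - vpi p r γ π' i ≤ 2 * γ * t k
        + γ * ∑ j, Pmat p π' i j * (vstar j - vpi p r γ π' j) := by
      intro i
      obtain ⟨as, -, has⟩ := Finset.exists_mem_eq_sup' Finset.univ_nonempty
        (fun a => ∑ j, p i a j * (r i a j + γ * vstar j))
      have hTs : Topt p r γ vstar i = ∑ j, p i as j * (r i as j + γ * vstar j) := has
      have hA : Topt p r γ vstar i - Topt p r γ (v k) i ≤ γ * t k := by
        have h1 : ∑ j, p i as j * (r i as j + γ * v k j) ≤ Topt p r γ (v k) i :=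
          Finset.le_sup' (fun a => ∑ j, p i a j * (r i a j + γ * v k j)) (Finset.mem_univ as)
        have h2 : ∑ j, p i as j * (r i as j + γ * vstar j)
            - ∑ j, p i as j * (r i as j + γ * v k j)
            = γ * ∑ j, p i as j * (vstar j - v k j) := by
          rw [← Finset.sum_sub_distrib, Finset.mul_sum]
          exact Finset.sum_congr rfl fun l _ => by ring
        have h3 : ∑ j, p i as j * (vstar j - v k j) ≤ ∑ j, p i as j * D k j :=
          Finset.sum_le_sum fun l _ => mul_le_mul_of_nonneg_left (le_abs_self _) (hp0 i as l)
        have h4 := mul_le_mul_of_nonneg_left (h3.trans (htle k i as)) hγ0'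
        linarith [hTs]
      have hTv : Topt p r γ (v k) i = rvec p r π' i + γ * ∑ j, p i (π' i) j * v k j := by
        rw [← hg]; exact tpol_apply' p r γ π' (v k) i
      have hB : Topt p r γ (v k) i - vpi p r γ π' i
          ≤ γ * t k + γ * ∑ j, p i (π' i) j * (vstar j - vpi p r γ π' j) := by
        have h5 := hfp i
        have h6 : ∑ j, p i (π' i) j * v k j - ∑ j, p i (π' i) j * vpi p r γ π' j
            = ∑ j, p i (π' i) j * (v k j - vstar j)
              + ∑ j, p i (π' i) j * (vstar j - vpi p r γ π' j) := by
          rw [← Finset.sum_add_distrib, ← Finset.sum_sub_distrib]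
          exact Finset.sum_congr rfl fun l _ => by ring
        have h7 : ∑ j, p i (π' i) j * (v k j - vstar j) ≤ t k := by
          refine le_trans (Finset.sum_le_sum fun l _ => ?_) (htle k i (π' i))
          exact mul_le_mul_of_nonneg_left
            ((le_abs_self _).trans_eq (abs_sub_comm _ _)) (hp0 i (π' i) l)
        have h8 := mul_le_mul_of_nonneg_left h7 hγ0'
        nlinarith [h5, hTv]
      have hv : vstar i = Topt p r γ vstar i := (congrFun hfix i).symm
      have hP : ∑ j, Pmat p π' i j * (vstar j - vpi p r γ π' j)
          = ∑ j, p i (π' i) j * (vstar j - vpi p r γ π' j) :=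
        Finset.sum_congr rfl fun l _ => by simp [Pmat]
      rw [hP]
      linarith
    have hmax := keyMax (Pmat p π') (fun i j => hp0 i (π' i) j) (fun i => hp1 i (π' i))
      hγ0' hγ1 _ hkey
    show Finset.univ.sup' Finset.univ_nonempty
      (fun x => |(vstar - vpi p r γ π') x|) ≤ _
    apply Finset.sup'_le
    intro x _
    rw [Pi.sub_apply, abs_of_nonneg (by linarith [hle x])]
    exact hmax x
  -- limsup
  have hfg : ∀ᶠ k in Filter.atTop, linfNorm (vstar - vpi p r γ (π k)) ≤
      (2 * γ / (1 - γ) * t 0) * γ ^ (k - 1)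
        + 2 * γ * concCoef p ν ^ (1 / pp) / (1 - γ) ^ 2 * εb := by
    filter_upwards [Filter.eventually_ge_atTop 1] with k hk
    obtain ⟨m, rfl⟩ : ∃ m, k = m + 1 := ⟨k - 1, (Nat.succ_pred_eq_of_pos hk).symm⟩
    have h1 := hfin m
    have h2 := hgeo m
    have h3 : 2 * γ * t m / (1 - γ) = 2 * γ / (1 - γ) * t m := by ring
    have h4 : 2 * γ / (1 - γ) * t m
        ≤ 2 * γ / (1 - γ) * (γ ^ m * t 0 + concCoef p ν ^ (1 / pp) * εb / (1 - γ)) :=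
      mul_le_mul_of_nonneg_left h2 (by positivity)
    have h5 : 2 * γ / (1 - γ) * (γ ^ m * t 0 + concCoef p ν ^ (1 / pp) * εb / (1 - γ))
        = (2 * γ / (1 - γ) * t 0) * γ ^ m
          + 2 * γ * concCoef p ν ^ (1 / pp) / (1 - γ) ^ 2 * εb := by
      field_simp
    simp only [Nat.add_sub_cancel]
    linarith
  have hgtend : Filter.Tendsto (fun k : ℕ => (2 * γ / (1 - γ) * t 0) * γ ^ (k - 1)
      + 2 * γ * concCoef p ν ^ (1 / pp) / (1 - γ) ^ 2 * εb) Filter.atTop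
      (nhds (2 * γ * concCoef p ν ^ (1 / pp) / (1 - γ) ^ 2 * εb)) := by
    have h0 : Filter.Tendsto (fun k : ℕ => γ ^ (k - 1)) Filter.atTop (nhds 0) :=
      (tendsto_pow_atTop_nhds_zero_of_lt_one hγ0' hγ1).comp (Filter.tendsto_sub_atTop_nat 1)
    have := (h0.const_mul (2 * γ / (1 - γ) * t 0)).add
      (tendsto_const_nhds (x := 2 * γ * concCoef p ν ^ (1 / pp) / (1 - γ) ^ 2 * εb)
        (f := Filter.atTop (α := ℕ)))
    simpa using this
  calc Filter.atTop.limsup (fun k => linfNorm (vstar - vpi p r γ (π k)))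
      ≤ Filter.atTop.limsup (fun k : ℕ => (2 * γ / (1 - γ) * t 0) * γ ^ (k - 1)
          + 2 * γ * concCoef p ν ^ (1 / pp) / (1 - γ) ^ 2 * εb) := by
        refine Filter.limsup_le_limsup hfg ?_ ?_
        · refine Filter.isCoboundedUnder_le_of_le _ (x := 0) fun k => ?_
          exact le_trans (abs_nonneg _)
            (Finset.le_sup' (fun x => |(vstar - vpi p r γ (π k)) x|) (Finset.mem_univ x0))
        · exact hgtend.isBoundedUnder_le
    _ = 2 * γ * concCoef p ν ^ (1 / pp) / (1 - γ) ^ 2 * εb := hgtend.limsup_eq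
end

section
/- One-step policy improvement bound with respect to the Policy Bellman residual: let π be a policy, let v be a function on X with residual b' := T^π v − v, and let π' be a policy greedy with respect to v. Then, writing P and P' for the stochastic matrices of π and π', the following componentwise inequality holds: v_* − v^{π'} ≤ γP_*(v_* − v^π) + (γP_*(I−γP)^{-1} − γP'(I−γP')^{-1}) b'. -/
open Matrix Filter Finset

section AuxLemmas

variable {X : Type*} {A : Type*} [Fintype X] [Nonempty X] [DecidableEq X]
  [Fintype A] [Nonempty A]

lemma mulVec_mono' {M : Matrix X X ℝ} (hM : ∀ i j, 0 ≤ M i j) {u w : X → ℝ} (h : u ≤ w) :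
    M.mulVec u ≤ M.mulVec w := fun i =>
  Finset.sum_le_sum fun j _ => mul_le_mul_of_nonneg_left (h j) (hM i j)

lemma expand_mulVec (γ : ℝ) (M : Matrix X X ℝ) (x : X → ℝ) :
    ((1 : Matrix X X ℝ) - γ • M).mulVec x = x - γ • M.mulVec x := by
  rw [Matrix.sub_mulVec, Matrix.one_mulVec, Matrix.smul_mulVec]

lemma stoch_isUnit_det {P : Matrix X X ℝ} (h0 : ∀ i j, 0 ≤ P i j)
    (h1 : ∀ i, ∑ j, P i j = 1) {γ : ℝ} (hγ0 : 0 ≤ γ) (hγ1 : γ < 1) :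
    IsUnit ((1 : Matrix X X ℝ) - γ • P).det := by
  rw [isUnit_iff_ne_zero]
  intro hdet
  obtain ⟨x, hx, hx0⟩ := (Matrix.exists_mulVec_eq_zero_iff).mpr hdet
  rw [expand_mulVec, sub_eq_zero] at hx0
  obtain ⟨i, -, hi⟩ := Finset.exists_max_image Finset.univ (fun j => |x j|) Finset.univ_nonempty
  have hxi : x i = γ * ∑ j, P i j * x j := congrFun hx0 i
  have hb : |x i| ≤ γ * |x i| := by
    have hsum : |∑ j, P i j * x j| ≤ |x i| := by
      calc |∑ j, P i j * x j| ≤ ∑ j, |P i j * x j| := Finset.abs_sum_le_sum_abs _ _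
        _ ≤ ∑ j, P i j * |x i| := by
            refine Finset.sum_le_sum fun j _ => ?_
            rw [abs_mul, abs_of_nonneg (h0 i j)]
            exact mul_le_mul_of_nonneg_left (hi j (Finset.mem_univ j)) (h0 i j)
        _ = |x i| := by rw [← Finset.sum_mul, h1 i, one_mul]
    calc |x i| = γ * |∑ j, P i j * x j| := by rw [hxi, abs_mul, abs_of_nonneg hγ0]
      _ ≤ γ * |x i| := mul_le_mul_of_nonneg_left hsum hγ0
  have hxi0 : |x i| = 0 := by nlinarith [abs_nonneg (x i)]
  refine hx (funext fun j => ?_)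
  have := le_trans (hi j (Finset.mem_univ j)) (le_of_eq hxi0)
  simpa using abs_eq_zero.mp (le_antisymm this (abs_nonneg _))

lemma inv_mulVec_nonneg {P : Matrix X X ℝ} (h0 : ∀ i j, 0 ≤ P i j)
    (h1 : ∀ i, ∑ j, P i j = 1) {γ : ℝ} (hγ0 : 0 ≤ γ) (hγ1 : γ < 1)
    {y : X → ℝ} (hy : 0 ≤ y) :
    0 ≤ ((1 : Matrix X X ℝ) - γ • P)⁻¹.mulVec y := by
  set M := (1 : Matrix X X ℝ) - γ • P with hM
  set x := M⁻¹.mulVec y with hxdef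
  have hMx : M.mulVec x = y := by
    rw [hxdef, Matrix.mulVec_mulVec, Matrix.mul_nonsing_inv _ (stoch_isUnit_det h0 h1 hγ0 hγ1),
      Matrix.one_mulVec]
  rw [hM, expand_mulVec] at hMx
  obtain ⟨i, -, hi⟩ := Finset.exists_min_image Finset.univ x Finset.univ_nonempty
  have hyi : x i - γ * (P.mulVec x) i = y i := by
    have := congrFun hMx i
    simpa using this
  have hSi : x i ≤ P.mulVec x i := by
    calc x i = ∑ j, P i j * x i := by rw [← Finset.sum_mul, h1 i, one_mul]
      _ ≤ ∑ j, P i j * x j :=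
        Finset.sum_le_sum fun j _ => mul_le_mul_of_nonneg_left (hi j (Finset.mem_univ j)) (h0 i j)
      _ = P.mulVec x i := rfl
  have key : 0 ≤ x i - γ * x i := by
    have h2 : γ * x i ≤ γ * (P.mulVec x i) := mul_le_mul_of_nonneg_left hSi hγ0
    have h3 : (0:ℝ) ≤ y i := by simpa using hy i
    linarith
  have h0i : 0 ≤ x i := by nlinarith [key]
  intro j
  exact le_trans h0i (hi j (Finset.mem_univ j))

lemma Tpol_apply' (p : X → A → X → ℝ) (r : X → A → X → ℝ) (γ : ℝ) (π : X → A)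
    (v : X → ℝ) (i : X) :
    Tpol p r γ π v i = ∑ j, p i (π i) j * (r i (π i) j + γ * v j) := by
  simp only [Tpol, Pi.add_apply, Pi.smul_apply, smul_eq_mul, rvec, Pmat, Matrix.mulVec,
    dotProduct, Matrix.of_apply, mul_add, Finset.sum_add_distrib, Finset.mul_sum]
  congr 1
  exact Finset.sum_congr rfl fun j _ => by ring

lemma Tpol_le_Topt (p : X → A → X → ℝ) (r : X → A → X → ℝ) (γ : ℝ) (π : X → A)
    (v : X → ℝ) : Tpol p r γ π v ≤ Topt p r γ v := fun i => by
  rw [Tpol_apply']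
  exact Finset.le_sup' (fun a => ∑ j, p i a j * (r i a j + γ * v j)) (Finset.mem_univ (π i))

lemma vpi_eq' (p : X → A → X → ℝ) (r : X → A → X → ℝ) (γ : ℝ) (π : X → A) (v : X → ℝ)
    (hdet : IsUnit ((1 : Matrix X X ℝ) - γ • Pmat p π).det) :
    vpi p r γ π =
      v + ((1 : Matrix X X ℝ) - γ • Pmat p π)⁻¹.mulVec (Tpol p r γ π v - v) := by
  set M := (1 : Matrix X X ℝ) - γ • Pmat p π with hM
  have h1 : Tpol p r γ π v - v = rvec p r π - M.mulVec v := by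
    rw [hM, expand_mulVec]; unfold Tpol; abel
  rw [h1, Matrix.mulVec_sub, Matrix.mulVec_mulVec, Matrix.nonsing_inv_mul _ hdet,
    Matrix.one_mulVec]
  unfold vpi
  rw [← hM]; abel

end AuxLemmas

/-- One-step policy improvement bound with respect to the Policy Bellman residual. -/
theorem one_step_improvement_policy_bellman_residual
    {X A : Type*} [Fintype X] [Nonempty X] [DecidableEq X] [Fintype A] [Nonempty A]
    (p : X → A → X → ℝ) (r : X → A → X → ℝ) (γ : ℝ)
    (hp0 : ∀ i a j, 0 ≤ p i a j) (hp1 : ∀ i a, ∑ j, p i a j = 1)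
    (hγ0 : 0 < γ) (hγ1 : γ < 1)
    (vstar : X → ℝ) (hfix : Topt p r γ vstar = vstar)
    (πs : X → A) (hπs : Greedy p r γ πs vstar)
    -- a policy π, an approximation v of its value, and π' greedy with respect to v
    (π π' : X → A) (v : X → ℝ) (hgreedy : Greedy p r γ π' v) :
    vstar - vpi p r γ π' ≤
      γ • (Pmat p πs).mulVec (vstar - vpi p r γ π) +
        ((γ • (Pmat p πs * ((1 : Matrix X X ℝ) - γ • Pmat p π)⁻¹) -
            γ • (Pmat p π' * ((1 : Matrix X X ℝ) - γ • Pmat p π')⁻¹)).mulVec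
          (Tpol p r γ π v - v)) := by

  have hγ0' : (0:ℝ) ≤ γ := le_of_lt hγ0
  set P := Pmat p π with hP
  set P' := Pmat p π' with hP'
  set Ps := Pmat p πs with hPs
  have hPent : ∀ (σ : X → A) (i j : X), 0 ≤ Pmat p σ i j := fun σ i j => hp0 i (σ i) j
  have hPsum : ∀ (σ : X → A) (i : X), ∑ j, Pmat p σ i j = 1 := fun σ i => hp1 i (σ i)
  have hdet : IsUnit ((1 : Matrix X X ℝ) - γ • P).det := by
    rw [hP]; exact stoch_isUnit_det (hPent π) (hPsum π) hγ0' hγ1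
  have hdet' : IsUnit ((1 : Matrix X X ℝ) - γ • P').det := by
    rw [hP']; exact stoch_isUnit_det (hPent π') (hPsum π') hγ0' hγ1
  set Q := ((1 : Matrix X X ℝ) - γ • P)⁻¹ with hQ
  set Q' := ((1 : Matrix X X ℝ) - γ • P')⁻¹ with hQ'
  set b := Tpol p r γ π v - v with hb
  set bs := Tpol p r γ π' v - v with hbs
  have hvpi : vpi p r γ π = v + Q.mulVec b := by
    rw [hQ, hP, hb]; exact vpi_eq' p r γ π v (by rw [← hP]; exact hdet)
  have hvpi' : vpi p r γ π' = v + Q'.mulVec bs := by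
    rw [hQ', hP', hbs]; exact vpi_eq' p r γ π' v (by rw [← hP']; exact hdet')
  have hMQ' : Q' * ((1 : Matrix X X ℝ) - γ • P') = 1 := Matrix.nonsing_inv_mul _ hdet'
  have hQ'M : ((1 : Matrix X X ℝ) - γ • P') * Q' = 1 := Matrix.mul_nonsing_inv _ hdet'
  have hMP : ((1 : Matrix X X ℝ) - γ • P') * P' = P' * ((1 : Matrix X X ℝ) - γ • P') := by
    simp [Matrix.sub_mul, Matrix.mul_sub, Matrix.smul_mul, Matrix.mul_smul]
  have hcomm : P' * Q' = Q' * P' := by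
    calc P' * Q' = (Q' * ((1 : Matrix X X ℝ) - γ • P')) * (P' * Q') := by rw [hMQ', one_mul]
      _ = Q' * ((((1 : Matrix X X ℝ) - γ • P') * P') * Q') := by
          rw [Matrix.mul_assoc, Matrix.mul_assoc]
      _ = Q' * (P' * (((1 : Matrix X X ℝ) - γ • P') * Q')) := by rw [hMP, Matrix.mul_assoc]
      _ = Q' * P' := by rw [hQ'M, Matrix.mul_one]
  have hQ1 : Q' = 1 + γ • (P' * Q') := by
    have h2 : Q' - γ • (Q' * P') = 1 := by
      rw [← hMQ', Matrix.mul_sub, Matrix.mul_one, Matrix.mul_smul]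
    rw [hcomm, ← h2]; abel
  have hQbs : Q'.mulVec bs = bs + γ • (P' * Q').mulVec bs := by
    conv_lhs => rw [hQ1]
    rw [Matrix.add_mulVec, Matrix.one_mulVec, Matrix.smul_mulVec]
  have hfixs : Tpol p r γ πs vstar = vstar := hπs.trans hfix
  have hvs : vstar - Tpol p r γ πs v = γ • Ps.mulVec (vstar - v) := by
    conv_lhs => rw [← hfixs]
    simp only [Tpol, ← hPs]
    rw [Matrix.mulVec_sub, smul_sub]; abel
  have hle1 : Tpol p r γ πs v - v ≤ bs := by
    rw [hbs, hgreedy]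
    exact sub_le_sub_right (Tpol_le_Topt p r γ πs v) v
  have hble : b ≤ bs := by
    rw [hb, hbs, hgreedy]
    exact sub_le_sub_right (Tpol_le_Topt p r γ π v) v
  have hQ'mono : Q'.mulVec b ≤ Q'.mulVec bs := by
    have h := inv_mulVec_nonneg (hPent π') (hPsum π') hγ0' hγ1 (sub_nonneg.mpr hble)
    rw [← hP', ← hQ', Matrix.mulVec_sub] at h
    exact sub_nonneg.mp h
  have hw : (P' * Q').mulVec b ≤ (P' * Q').mulVec bs := by
    rw [← Matrix.mulVec_mulVec, ← Matrix.mulVec_mulVec]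
    exact mulVec_mono' (by rw [hP']; exact hPent π') hQ'mono
  rw [hvpi, hvpi']
  have hRHS : γ • Ps.mulVec (vstar - (v + Q.mulVec b)) +
      ((γ • (Ps * Q) - γ • (P' * Q')).mulVec b)
      = γ • Ps.mulVec (vstar - v) - γ • (P' * Q').mulVec b := by
    have h1 : vstar - (v + Q.mulVec b) = (vstar - v) - Q.mulVec b := by abel
    rw [h1]
    simp only [Matrix.mulVec_sub, Matrix.sub_mulVec, Matrix.smul_mulVec,
      Matrix.mulVec_mulVec, smul_sub]
    abel
  rw [hRHS]
  have hEq : vstar - (v + Q'.mulVec bs) =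
      γ • Ps.mulVec (vstar - v) + (Tpol p r γ πs v - v - bs) - γ • (P' * Q').mulVec bs := by
    rw [hQbs, ← hvs]; abel
  rw [hEq]
  have h1 : γ • Ps.mulVec (vstar - v) + (Tpol p r γ πs v - v - bs)
      ≤ γ • Ps.mulVec (vstar - v) := by
    have h0 : Tpol p r γ πs v - v - bs ≤ 0 := sub_nonpos.mpr hle1
    calc γ • Ps.mulVec (vstar - v) + (Tpol p r γ πs v - v - bs)
        ≤ γ • Ps.mulVec (vstar - v) + 0 := add_le_add_right h0 _
      _ = γ • Ps.mulVec (vstar - v) := add_zero _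
  have h2 : γ • (P' * Q').mulVec b ≤ γ • (P' * Q').mulVec bs :=
    smul_le_smul_of_nonneg_left hw hγ0'
  exact sub_le_sub h1 h2
end
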